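/- Let X and Y be real Banach spaces (complete normed real vector spaces) and let T : X → Y be a continuous function such that for every x ∈ ℝ and every continuous function f : ℝ → X one has T( ∫_0^x f(t) dt ) = ∫_0^x T(f(t)) dt (interval Bochner integrals). Then T is additive: T(a + b) = T(a) + T(b) for all a, b ∈ X. -/

import Mathlib

open intervalIntegral in
lemma aux_piecewise_integral {Z : Type*} [NormedAddCommGroup Z] [NormedSpace ℝ Z]
    [CompleteSpace Z] (lam mu : ℝ → ℝ) (hlamc : Continuous lam) (hmuc : Continuous mu)
    (hz : lam 1 = 0) (hz' : mu 1 = 0)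
    (lamint : (∫ t in (0:ℝ)..1, lam t) = 1) (muint : (∫ t in (1:ℝ)..2, mu t) = 1)
    (u v : Z) :
    (∫ t in (0:ℝ)..2, if t ≤ 1 then lam t • u else mu t • v) = u + v := by
  have hgc : Continuous fun t : ℝ => if t ≤ 1 then lam t • u else mu t • v := by
    apply Continuous.if_le (hlamc.smul continuous_const) (hmuc.smul continuous_const)
      continuous_id continuous_const
    intro t ht
    simp only [id] at ht
    simp [ht, hz, hz']
  have hsplit := intervalIntegral.integral_add_adjacent_intervals
    (μ := MeasureTheory.volume) (a := (0:ℝ)) (b := 1) (c := 2)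
    (hgc.intervalIntegrable _ _) (hgc.intervalIntegrable _ _)
  rw [← hsplit]
  have h1 : (∫ t in (0:ℝ)..1, if t ≤ 1 then lam t • u else mu t • v) = u := by
    rw [intervalIntegral.integral_congr (g := fun t => lam t • u) ?_,
      intervalIntegral.integral_smul_const, lamint, one_smul]
    intro t ht
    rw [Set.uIcc_of_le (by norm_num)] at ht
    simp [ht.2]
  have h2 : (∫ t in (1:ℝ)..2, if t ≤ 1 then lam t • u else mu t • v) = v := by
    rw [intervalIntegral.integral_congr (g := fun t => mu t • v) ?_,
      intervalIntegral.integral_smul_const, muint, one_smul]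
    intro t ht
    rw [Set.uIcc_of_le (by norm_num)] at ht
    by_cases h : t ≤ 1
    · have : t = 1 := le_antisymm h ht.1
      simp [this, hz, hz']
    · simp [h]
  rw [h1, h2]

/-- A continuous map between real Banach spaces that commutes with all interval Bochner
integrals of continuous functions is additive. -/
theorem additive_of_commutes_with_integrals
    (X : Type*) [NormedAddCommGroup X] [NormedSpace ℝ X] [CompleteSpace X]
    (Y : Type*) [NormedAddCommGroup Y] [NormedSpace ℝ Y] [CompleteSpace Y]
    (T : X → Y) (hT : Continuous T)
    (hint : ∀ (x : ℝ) (f : ℝ → X), Continuous f →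
      T (∫ t in (0 : ℝ)..x, f t) = ∫ t in (0 : ℝ)..x, T (f t)) :
    ∀ a b : X, T (a + b) = T a + T b := by
  have hom : ∀ (x : ℝ) (c : X), T (x • c) = x • T c := by
    intro x c
    have h := hint x (fun _ => c) continuous_const
    simpa using h
  intro a b
  set lam : ℝ → ℝ := fun t => (3/2)*(1 - t^2) with hlam
  set mu : ℝ → ℝ := fun t => 3*(t-1)^2 with hmu
  have hlamc : Continuous lam := by fun_prop
  have hmuc : Continuous mu := by fun_prop
  have hz : lam 1 = 0 := by simp [hlam]
  have hz' : mu 1 = 0 := by simp [hmu]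
  have lamint : (∫ t in (0:ℝ)..1, lam t) = 1 := by
    have : lam = fun t => 3/2 - (3/2)*t^2 := by funext t; simp only [hlam]; ring
    rw [this, intervalIntegral.integral_sub intervalIntegrable_const
      ((show Continuous fun t : ℝ => (3/2 : ℝ) * t ^ 2 from continuous_const.mul (continuous_pow 2)).intervalIntegrable _ _),
      intervalIntegral.integral_const, intervalIntegral.integral_const_mul,
      integral_pow]
    norm_num
  have muint : (∫ t in (1:ℝ)..2, mu t) = 1 := by
    have : mu = fun t => 3*t^2 - 6*t + 3 := by funext t; simp only [hmu]; ring
    rw [this]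
    simp only []
    rw [intervalIntegral.integral_add ((show Continuous fun t : ℝ => 3 * t ^ 2 - 6 * t from (continuous_const.mul (continuous_pow 2)).sub
      (continuous_const.mul (continuous_id' : Continuous fun x:ℝ => x))).intervalIntegrable _ _) intervalIntegrable_const,
      intervalIntegral.integral_sub ((show Continuous fun t : ℝ => 3 * t ^ 2 from continuous_const.mul (continuous_pow 2)).intervalIntegrable _ _)
      ((show Continuous fun t : ℝ => 6 * t from continuous_const.mul (continuous_id' : Continuous fun x:ℝ => x)).intervalIntegrable _ _),
      intervalIntegral.integral_const_mul, intervalIntegral.integral_const_mul,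
      integral_pow, integral_id, intervalIntegral.integral_const]
    norm_num
  set g : ℝ → X := fun t => if t ≤ 1 then lam t • a else mu t • b with hg
  have hgc : Continuous g := by
    apply Continuous.if_le (hlamc.smul continuous_const) (hmuc.smul continuous_const)
      continuous_id continuous_const
    intro t ht
    simp only [id] at ht
    simp [hg, ht, hz, hz']
  have key := hint 2 g hgc
  have Tg : ∀ t : ℝ, T (g t) = if t ≤ 1 then lam t • T a else mu t • T b := by
    intro t
    by_cases h : t ≤ 1 <;> simp [hg, h, hom]
  have int_g : (∫ t in (0:ℝ)..2, g t) = a + b :=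
    aux_piecewise_integral lam mu hlamc hmuc hz hz' lamint muint a b
  have int_Tg : (∫ t in (0:ℝ)..2, T (g t)) = T a + T b := by
    rw [intervalIntegral.integral_congr (g := fun t => if t ≤ 1 then lam t • T a else mu t • T b)
      (fun t _ => Tg t)]
    exact aux_piecewise_integral lam mu hlamc hmuc hz hz' lamint muint (T a) (T b)
  rw [int_g, int_Tg] at key
  exact key
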